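/- arXiv:2210.09350 — 2 statements merged into one kernel-verified Lean document; each statement's English description precedes it below -/
import Mathlib

section
/- If r is a square root on a pseudo MV-algebra M, then r(x) ≤ (x ⊕ r(0)) ∧ (r(0) ⊕ x) for all x ∈ M. -/
/-- A pseudo MV-algebra `(M; ⊕, ⁻, ∼, 0, 1)` satisfying axioms (A1)–(A8),
with `x ⊙ y := (y⁻ ⊕ x⁻)∼`. -/
class PseudoMV (M : Type*) where
  oplus : M → M → M
  lneg : M → M
  rneg : M → M
  zero : M
  one : M
  oplus_assoc : ∀ x y z : M, oplus x (oplus y z) = oplus (oplus x y) z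
  oplus_zero : ∀ x : M, oplus x zero = x
  zero_oplus : ∀ x : M, oplus zero x = x
  oplus_one : ∀ x : M, oplus x one = one
  one_oplus : ∀ x : M, oplus one x = one
  lneg_one : lneg one = zero
  rneg_one : rneg one = zero
  a5 : ∀ x y : M, rneg (oplus (lneg x) (lneg y)) = lneg (oplus (rneg x) (rneg y))
  a6₁ : ∀ x y : M,
    oplus x (rneg (oplus (lneg y) (lneg (rneg x)))) =
      oplus y (rneg (oplus (lneg x) (lneg (rneg y))))
  a6₂ : ∀ x y : M,
    oplus x (rneg (oplus (lneg y) (lneg (rneg x)))) =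
      oplus (rneg (oplus (lneg (lneg y)) (lneg x))) y
  a6₃ : ∀ x y : M,
    oplus x (rneg (oplus (lneg y) (lneg (rneg x)))) =
      oplus (rneg (oplus (lneg (lneg x)) (lneg y))) x
  a7 : ∀ x y : M,
    rneg (oplus (lneg (oplus (lneg x) y)) (lneg x)) =
      rneg (oplus (lneg y) (lneg (oplus x (rneg y))))
  a8 : ∀ x : M, rneg (lneg x) = x

namespace PseudoMV

variable {M : Type*} [PseudoMV M]

/-- `x ⊙ y := (y⁻ ⊕ x⁻)∼`. -/
def mul (x y : M) : M := rneg (oplus (lneg y) (lneg x))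

/-- `x ∨ y = x ⊕ (x∼ ⊙ y)` (axiom (A6)). -/
def sup (x y : M) : M := oplus x (mul (rneg x) y)

/-- `x ∧ y = x ⊙ (x⁻ ⊕ y)` (axiom (A7)). -/
def inf (x y : M) : M := mul x (oplus (lneg x) y)

/-- The lattice order of a pseudo MV-algebra. -/
def le (x y : M) : Prop := sup x y = y

/-- `x → y := x⁻ ⊕ y`. -/
def arrow (x y : M) : M := oplus (lneg x) y

/-- `x ⇝ y := y ⊕ x∼`. -/
def squig (x y : M) : M := oplus y (rneg x)

/-- A weak square root: (Sq1) and (Sq2). -/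
def IsWeakSqrt (r : M → M) : Prop :=
  (∀ x : M, mul (r x) (r x) = x) ∧
  (∀ x y : M, le (mul y y) x → le y (r x))

/-- A square root: (Sq1), (Sq2) and (Sq3). -/
def IsSqrt (r : M → M) : Prop :=
  IsWeakSqrt r ∧
  (∀ x : M, r (lneg x) = arrow (r x) (r zero) ∧ r (rneg x) = squig (r x) (r zero))

end PseudoMV

namespace PseudoMV

variable {M : Type*} [PseudoMV M]

lemma lneg_rneg' (x : M) : lneg (rneg x) = x := by
  have h := a5 x (one : M)
  simp only [lneg_one, rneg_one, oplus_zero] at h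
  rw [a8] at h
  exact h.symm

lemma mul_alt' (x y : M) : mul x y = lneg (oplus (rneg y) (rneg x)) := a5 y x

lemma oplus_rneg_self' (x : M) : oplus x (rneg x) = one := by
  have h := a6₁ x (one : M)
  simp only [lneg_one, zero_oplus, a8, one_oplus] at h
  exact h

lemma oplus_lneg_self' (x : M) : oplus (lneg x) x = one := by
  have h := a6₃ x (one : M)
  simp only [lneg_one, zero_oplus, oplus_zero, a8] at h
  rw [oplus_rneg_self'] at h
  exact h.symm

lemma le_iff₁' {x y : M} : le x y ↔ oplus (lneg x) y = one := by
  constructor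
  · intro h
    have hy : oplus x (mul (rneg x) y) = y := h
    rw [← hy, oplus_assoc, oplus_lneg_self', one_oplus]
  · intro h
    show oplus x (rneg (oplus (lneg y) (lneg (rneg x)))) = y
    rw [a6₁ x y, lneg_rneg', h, rneg_one, oplus_zero]

lemma le_iff₂' {x y : M} : le x y ↔ oplus y (rneg x) = one := by
  constructor
  · intro h
    have hy : oplus (rneg (oplus (lneg (lneg x)) (lneg y))) x = y := by
      rw [← a6₃ x y]; exact h
    rw [← hy, ← oplus_assoc, oplus_rneg_self', oplus_one]
  · intro h
    show oplus x (rneg (oplus (lneg y) (lneg (rneg x)))) = y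
    rw [a6₂ x y]
    have hz : rneg (oplus (lneg (lneg y)) (lneg x)) = zero := by
      rw [a5 (lneg y) x, a8, h, lneg_one]
    rw [hz, zero_oplus]

lemma ple_refl' (x : M) : le x x := le_iff₁'.mpr (oplus_lneg_self' x)

lemma eq_one_of_one_le' {x : M} (h : le one x) : x = one := by
  have h1 := le_iff₁'.mp h
  rwa [lneg_one, zero_oplus] at h1

lemma le_self_oplus' (x m : M) : le x (oplus x m) := by
  apply le_iff₁'.mpr
  rw [oplus_assoc, oplus_lneg_self', one_oplus]

lemma le_oplus_self' (x m : M) : le x (oplus m x) := by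
  apply le_iff₂'.mpr
  rw [← oplus_assoc, oplus_rneg_self', oplus_one]

lemma ple_trans' {x y z : M} (h1 : le x y) (h2 : le y z) : le x z := by
  apply le_iff₁'.mpr
  have hz : oplus y (mul (rneg y) z) = z := h2
  rw [← hz, oplus_assoc, le_iff₁'.mp h1, one_oplus]

lemma oplus_le_oplus_left' (t : M) {p q : M} (h : le p q) :
    le (oplus t p) (oplus t q) := by
  have hq : oplus p (mul (rneg p) q) = q := h
  rw [← hq, oplus_assoc]
  exact le_self_oplus' _ _

lemma oplus_le_oplus_right' (t : M) {p q : M} (h : le p q) :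
    le (oplus p t) (oplus q t) := by
  have hq : oplus (rneg (oplus (lneg (lneg p)) (lneg q))) p = q := by
    rw [← a6₃ p q]; exact h
  rw [← hq, ← oplus_assoc]
  exact le_oplus_self' _ _

lemma lneg_antitone' {p q : M} (h : le p q) : le (lneg q) (lneg p) := by
  apply le_iff₂'.mpr
  rw [a8]
  exact le_iff₁'.mp h

lemma rneg_antitone' {p q : M} (h : le p q) : le (rneg q) (rneg p) := by
  apply le_iff₁'.mpr
  rw [lneg_rneg']
  exact le_iff₂'.mp h

lemma pmul_le_mul_right' (a : M) {z z' : M} (h : le z z') :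
    le (mul a z) (mul a z') := by
  have h1 := oplus_le_oplus_right' (lneg a) (lneg_antitone' h)
  exact rneg_antitone' h1

lemma key₁' (a : M) :
    oplus (oplus a (rneg (oplus a a))) (oplus a (rneg (oplus a a))) = one := by
  have h1 : le a (oplus a (rneg (oplus a a))) := le_self_oplus' _ _
  have h2 : le (rneg a) (oplus a (rneg (oplus a a))) := by
    apply le_iff₁'.mpr
    rw [lneg_rneg', oplus_assoc, oplus_rneg_self']
  have h3 := ple_trans' (oplus_le_oplus_right' (rneg a) h1)
    (oplus_le_oplus_left' _ h2)
  rw [oplus_rneg_self'] at h3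
  exact eq_one_of_one_le' h3

lemma key₂' (b : M) :
    oplus (oplus (lneg (oplus b b)) b) (oplus (lneg (oplus b b)) b) = one := by
  have h1 : le b (oplus (lneg (oplus b b)) b) := le_oplus_self' _ _
  have h2 : le (lneg b) (oplus (lneg (oplus b b)) b) := by
    apply le_iff₂'.mpr
    rw [a8, ← oplus_assoc, oplus_lneg_self']
  have h3 := ple_trans' (oplus_le_oplus_right' b h2)
    (oplus_le_oplus_left' _ h1)
  rw [oplus_lneg_self'] at h3
  exact eq_one_of_one_le' h3

end PseudoMV

open PseudoMV

theorem stmt8 {M : Type*} [PseudoMV M] (r : M → M) (hr : IsSqrt r) :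
    ∀ x : M, le (r x) (inf (oplus x (r zero)) (oplus (r zero) x)) := by
  obtain ⟨⟨hsq1, hsq2⟩, _hsq3⟩ := hr
  intro x
  have hxa : rneg (oplus (lneg (r x)) (lneg (r x))) = x := hsq1 x
  have hxb : lneg (oplus (rneg (r x)) (rneg (r x))) = x :=
    (mul_alt' (r x) (r x)).symm.trans (hsq1 x)
  -- Part 1 : r x ≤ x ⊕ r 0
  have hdd : oplus (oplus (lneg (r x)) x) (oplus (lneg (r x)) x) = one := by
    have h := key₁' (lneg (r x))
    rwa [hxa] at h
  have hmd : mul (rneg (oplus (lneg (r x)) x)) (rneg (oplus (lneg (r x)) x)) = zero := by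
    show rneg (oplus (lneg (rneg (oplus (lneg (r x)) x)))
        (lneg (rneg (oplus (lneg (r x)) x)))) = zero
    rw [lneg_rneg', hdd, rneg_one]
  have hsd : le (rneg (oplus (lneg (r x)) x)) (r zero) :=
    hsq2 zero _ (by rw [hmd]; exact ple_refl' zero)
  have h1 : oplus (oplus (lneg (r x)) x) (r zero) = one := by
    have h' := le_iff₁'.mp hsd
    rwa [lneg_rneg'] at h'
  have goal1 : le (r x) (oplus x (r zero)) := by
    apply le_iff₁'.mpr
    rw [oplus_assoc]
    exact h1
  -- Part 2 : r x ≤ r 0 ⊕ x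
  have hee : oplus (oplus x (rneg (r x))) (oplus x (rneg (r x))) = one := by
    have h := key₂' (rneg (r x))
    rwa [hxb] at h
  have hme : mul (lneg (oplus x (rneg (r x)))) (lneg (oplus x (rneg (r x)))) = zero := by
    rw [mul_alt', a8, hee, lneg_one]
  have hse : le (lneg (oplus x (rneg (r x)))) (r zero) :=
    hsq2 zero _ (by rw [hme]; exact ple_refl' zero)
  have h2 : oplus (r zero) (oplus x (rneg (r x))) = one := by
    have h' := le_iff₂'.mp hse
    rwa [a8] at h'
  have goal2 : le (r x) (oplus (r zero) x) := by
    apply le_iff₂'.mpr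
    rw [← oplus_assoc]
    exact h2
  -- Combine via A7
  have hA2 : oplus (oplus x (r zero)) (rneg (r x)) = one := le_iff₂'.mp goal1
  have hc := a7 (oplus x (r zero)) (r x)
  rw [hA2, lneg_one, oplus_zero, a8] at hc
  have hc' : mul (oplus x (r zero)) (oplus (lneg (oplus x (r zero))) (r x)) = r x := hc
  have hmono := pmul_le_mul_right' (oplus x (r zero))
    (oplus_le_oplus_left' (lneg (oplus x (r zero))) goal2)
  rw [hc'] at hmono
  exact hmono
end

section
/- If f : M₁ → M₂ is a surjective homomorphism of pseudo MV-algebras and r is a square root on M₁, then the map τ : M₂ → M₂ defined by τ(f(x)) = f(r(x)) is a well-defined square root on M₂. -/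
open PseudoMV

section PMVLemmas

variable {M : Type*} [PseudoMV M]

lemma pmv_lneg_rneg (x : M) : lneg (rneg x) = x := by
  have h := a5 x (one : M)
  rw [lneg_one, rneg_one, oplus_zero, oplus_zero, a8] at h
  exact h.symm

lemma pmv_rneg_zero : (rneg zero : M) = one := by
  rw [← lneg_one, a8]

lemma pmv_lneg_zero : (lneg zero : M) = one := by
  rw [← rneg_one, pmv_lneg_rneg]

lemma pmv_mul_one (x : M) : mul x one = x := by
  show rneg (oplus (lneg one) (lneg x)) = x
  rw [lneg_one, zero_oplus, a8]

lemma pmv_one_mul (x : M) : mul one x = x := by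
  show rneg (oplus (lneg x) (lneg one)) = x
  rw [lneg_one, oplus_zero, a8]

lemma pmv_mul_zero (x : M) : mul x zero = zero := by
  show rneg (oplus (lneg zero) (lneg x)) = zero
  rw [pmv_lneg_zero, one_oplus, rneg_one]

lemma pmv_lneg_mul (x y : M) : lneg (mul x y) = oplus (lneg y) (lneg x) := by
  show lneg (rneg _) = _
  rw [pmv_lneg_rneg]

lemma pmv_mul_assoc (x y z : M) : mul (mul x y) z = mul x (mul y z) := by
  show rneg (oplus (lneg z) (lneg (mul x y))) = rneg (oplus (lneg (mul y z)) (lneg x))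
  rw [pmv_lneg_mul, pmv_lneg_mul, oplus_assoc]

lemma pmv_mul_eq (x y : M) : mul x y = lneg (oplus (rneg y) (rneg x)) := a5 y x

lemma pmv_rneg_mul (x y : M) : rneg (mul x y) = oplus (rneg y) (rneg x) := by
  rw [pmv_mul_eq, a8]

lemma pmv_lneg_oplus (x y : M) : lneg (oplus x y) = mul (lneg y) (lneg x) := by
  rw [pmv_mul_eq, a8, a8]

lemma pmv_lneg_lneg_one (x : M) : oplus (lneg (lneg x)) (lneg x) = one := by
  have h := a7 x (zero : M)
  simp only [oplus_zero, pmv_rneg_zero, oplus_one, pmv_lneg_zero, one_oplus, rneg_one,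
    lneg_one] at h
  have h2 := congrArg lneg h
  rwa [pmv_lneg_rneg, pmv_lneg_zero] at h2

lemma pmv_lneg_oplus_self (x : M) : oplus (lneg x) x = one := by
  have h := pmv_lneg_lneg_one (rneg x)
  rwa [pmv_lneg_rneg] at h

lemma pmv_mul_lneg_self (x : M) : mul x (lneg x) = zero := by
  show rneg (oplus (lneg (lneg x)) (lneg x)) = zero
  rw [pmv_lneg_lneg_one, rneg_one]

lemma pmv_sup_comm (x y : M) : sup x y = sup y x := a6₁ x y

lemma pmv_sup_eq₂ (x y : M) : sup x y = oplus (mul x (lneg y)) y := a6₂ x y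

lemma pmv_oplus_lneg_one_of_le {x y : M} (h : le x y) : oplus (lneg x) y = one := by
  have h' : sup x y = y := h
  calc oplus (lneg x) y = oplus (lneg x) (sup x y) := by rw [h']
    _ = oplus (oplus (lneg x) x) (mul (rneg x) y) := oplus_assoc _ _ _
    _ = one := by rw [pmv_lneg_oplus_self, one_oplus]

lemma pmv_mul_lneg_zero_of_oplus {x y : M} (h : oplus (lneg x) y = one) :
    mul x (lneg y) = zero := by
  have h7 : mul x (oplus (lneg x) y) = mul (oplus x (rneg y)) y := a7 x y
  rw [h, pmv_mul_one] at h7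
  rw [h7, pmv_mul_assoc, pmv_mul_lneg_self, pmv_mul_zero]

lemma pmv_le_of_mul_lneg {x y : M} (h : mul x (lneg y) = zero) : le x y := by
  show sup x y = y
  rw [pmv_sup_eq₂, h, zero_oplus]

lemma pmv_le_iff_mul (x y : M) : le x y ↔ mul x (lneg y) = zero :=
  ⟨fun h => pmv_mul_lneg_zero_of_oplus (pmv_oplus_lneg_one_of_le h), pmv_le_of_mul_lneg⟩

lemma pmv_le_iff_oplus (x y : M) : le x y ↔ oplus (lneg x) y = one :=
  ⟨pmv_oplus_lneg_one_of_le, fun h => pmv_le_of_mul_lneg (pmv_mul_lneg_zero_of_oplus h)⟩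

lemma pmv_le_refl (x : M) : le x x := pmv_le_of_mul_lneg (pmv_mul_lneg_self x)

lemma pmv_eq_mul_of_le {x y : M} (h : le x y) : x = mul (oplus x (rneg y)) y := by
  have h1 := pmv_oplus_lneg_one_of_le h
  have h7 : mul x (oplus (lneg x) y) = mul (oplus x (rneg y)) y := a7 x y
  rwa [h1, pmv_mul_one] at h7

lemma pmv_le_trans {x y z : M} (h1 : le x y) (h2 : le y z) : le x z := by
  apply pmv_le_of_mul_lneg
  have hx := pmv_eq_mul_of_le h1
  rw [hx, pmv_mul_assoc, (pmv_le_iff_mul y z).mp h2, pmv_mul_zero]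

lemma pmv_le_antisymm {x y : M} (h1 : le x y) (h2 : le y x) : x = y := by
  have e1 : sup x y = y := h1
  have e2 : sup y x = x := h2
  rw [← e1, pmv_sup_comm, e2]

lemma pmv_le_iff_mul' (x y : M) : le x y ↔ mul (rneg y) x = zero := by
  have e : mul (rneg y) x = rneg (oplus (lneg x) y) := by
    show rneg (oplus (lneg x) (lneg (rneg y))) = _
    rw [pmv_lneg_rneg]
  rw [e, pmv_le_iff_oplus]
  constructor
  · intro h; rw [h, rneg_one]
  · intro h
    have h2 := congrArg lneg h
    rwa [pmv_lneg_rneg, pmv_lneg_zero] at h2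

lemma pmv_mul_eq_zero_iff_le_rneg (p q : M) : mul p q = zero ↔ le p (rneg q) := by
  rw [pmv_le_iff_mul p (rneg q), pmv_lneg_rneg]

lemma pmv_mul_eq_zero_iff_le_lneg (p q : M) : mul p q = zero ↔ le q (lneg p) := by
  rw [pmv_le_iff_mul' q (lneg p), a8]

lemma pmv_res1 (x y z : M) : le (mul x y) z ↔ le x (oplus z (rneg y)) := by
  rw [pmv_le_iff_mul (mul x y) z, pmv_mul_assoc, pmv_mul_eq_zero_iff_le_rneg,
    pmv_rneg_mul, a8]

lemma pmv_res2 (x y z : M) : le (mul x y) z ↔ le y (oplus (lneg x) z) := by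
  rw [pmv_le_iff_mul' (mul x y) z, ← pmv_mul_assoc, pmv_mul_eq_zero_iff_le_lneg,
    pmv_lneg_mul, pmv_lneg_rneg]

lemma pmv_mul_le_mul_left {x y : M} (z : M) (h : le x y) : le (mul z x) (mul z y) := by
  rw [pmv_res2]
  exact pmv_le_trans h ((pmv_res2 z y (mul z y)).mp (pmv_le_refl _))

lemma pmv_mul_le_mul_right {x y : M} (z : M) (h : le x y) : le (mul x z) (mul y z) := by
  rw [pmv_res1]
  exact pmv_le_trans h ((pmv_res1 y z (mul y z)).mp (pmv_le_refl _))

lemma pmv_mul_le_right (x y : M) : le (mul x y) y := by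
  apply pmv_le_of_mul_lneg
  rw [pmv_mul_assoc, pmv_mul_lneg_self, pmv_mul_zero]

lemma pmv_lneg_le_lneg {x y : M} (h : le x y) : le (lneg y) (lneg x) := by
  rw [pmv_le_iff_mul' (lneg y) (lneg x), a8]
  exact (pmv_le_iff_mul x y).mp h

lemma pmv_rneg_le_rneg {x y : M} (h : le x y) : le (rneg y) (rneg x) := by
  rw [pmv_le_iff_mul (rneg y) (rneg x), pmv_lneg_rneg]
  exact (pmv_le_iff_mul' x y).mp h

lemma pmv_oplus_le_oplus_right {x y : M} (z : M) (h : le x y) : le (oplus x z) (oplus y z) := by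
  have h1 := pmv_mul_le_mul_left (lneg z) (pmv_lneg_le_lneg h)
  have h2 := pmv_rneg_le_rneg h1
  rwa [← pmv_lneg_oplus, ← pmv_lneg_oplus, a8, a8] at h2

lemma pmv_le_sup_left (x y : M) : le x (sup x y) := by
  rw [pmv_le_iff_oplus]
  show oplus (lneg x) (oplus x (mul (rneg x) y)) = one
  rw [oplus_assoc, pmv_lneg_oplus_self, one_oplus]

lemma pmv_sqrt_mono {r : M → M} (hw : IsWeakSqrt r) {a b : M} (h : le a b) :
    le (r a) (r b) := by
  apply hw.2 b (r a)
  rw [hw.1 a]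
  exact h

lemma pmv_sqrt_key {r : M → M} (hw : IsWeakSqrt r) {a e c : M} (h : le c (oplus a e)) :
    le (r c) (oplus (r a) e) := by
  have hrc : le (r c) (r (oplus a e)) := pmv_sqrt_mono hw h
  have hdd : le (mul (mul (r (oplus a e)) (lneg e)) (mul (r (oplus a e)) (lneg e))) a := by
    have e1 : le (mul (lneg e) (r (oplus a e))) (r (oplus a e)) := pmv_mul_le_right _ _
    have e2 := pmv_mul_le_mul_right (lneg e) e1
    have e3 := pmv_mul_le_mul_left (r (oplus a e)) e2
    have e4 : mul (mul (r (oplus a e)) (lneg e)) (mul (r (oplus a e)) (lneg e)) =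
        mul (r (oplus a e)) (mul (mul (lneg e) (r (oplus a e))) (lneg e)) := by
      rw [pmv_mul_assoc, ← pmv_mul_assoc (lneg e) (r (oplus a e)) (lneg e)]
    have e5 : mul (r (oplus a e)) (mul (r (oplus a e)) (lneg e)) =
        mul (oplus a e) (lneg e) := by
      rw [← pmv_mul_assoc, hw.1]
    have e6 : le (mul (oplus a e) (lneg e)) a := by
      rw [pmv_res1, a8]
      exact pmv_le_refl _
    rw [e4]
    refine pmv_le_trans e3 ?_
    rw [e5]
    exact e6
  have hdra : le (mul (r (oplus a e)) (lneg e)) (r a) := hw.2 a _ hdd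
  have hsde : le (r (oplus a e)) (oplus (mul (r (oplus a e)) (lneg e)) e) := by
    have h1 := (pmv_res1 (r (oplus a e)) (lneg e) (mul (r (oplus a e)) (lneg e))).mp
      (pmv_le_refl _)
    rwa [a8] at h1
  exact pmv_le_trans hrc (pmv_le_trans hsde (pmv_oplus_le_oplus_right e hdra))

end PMVLemmas


theorem stmt12 {M₁ M₂ : Type*} [PseudoMV M₁] [PseudoMV M₂] (f : M₁ → M₂)
    (hsur : Function.Surjective f)
    (hadd : ∀ x y : M₁, f (oplus x y) = oplus (f x) (f y))
    (hln : ∀ x : M₁, f (lneg x) = lneg (f x))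
    (hrn : ∀ x : M₁, f (rneg x) = rneg (f x))
    (h0 : f zero = zero) (h1 : f one = one)
    (r : M₁ → M₁) (hr : IsSqrt r) :
    ∃ τ : M₂ → M₂, (∀ x : M₁, τ (f x) = f (r x)) ∧ IsSqrt τ := by
  classical
  obtain ⟨⟨hw1, hw2⟩, h3⟩ := hr
  have hw : IsWeakSqrt r := ⟨hw1, hw2⟩
  have hmul : ∀ x y : M₁, f (mul x y) = mul (f x) (f y) := by
    intro x y
    show f (rneg (oplus (lneg y) (lneg x))) = rneg (oplus (lneg (f y)) (lneg (f x)))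
    rw [hrn, hadd, hln, hln]
  have hsup : ∀ x y : M₁, f (sup x y) = sup (f x) (f y) := by
    intro x y
    show f (oplus x (mul (rneg x) y)) = oplus (f x) (mul (rneg (f x)) (f y))
    rw [hadd, hmul, hrn]
  have hle : ∀ x y : M₁, le x y → le (f x) (f y) := by
    intro x y h
    have h' : sup x y = y := h
    show sup (f x) (f y) = f y
    rw [← hsup, h']
  have star : ∀ w a : M₁, le (mul (f w) (f w)) (f a) → le (f w) (f (r a)) := by
    intro w a h
    have h' : le (f (mul w w)) (f a) := by rw [hmul]; exact h
    have hce : le (mul w w) (oplus a (mul (rneg a) (mul w w))) := by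
      have h1 := pmv_le_sup_left (mul w w) a
      rw [pmv_sup_comm] at h1
      exact h1
    have hfe : f (mul (rneg a) (mul w w)) = zero := by
      rw [hmul, hrn]
      exact (pmv_le_iff_mul' (f (mul w w)) (f a)).mp h'
    have hkey := pmv_sqrt_key hw hce
    have hwle : le w (r (mul w w)) := hw2 (mul w w) w (pmv_le_refl _)
    have hfin := hle _ _ (pmv_le_trans hwle hkey)
    rw [hadd, hfe, oplus_zero] at hfin
    exact hfin
  have wd : ∀ a b : M₁, f a = f b → f (r a) = f (r b) := by
    have key : ∀ p q : M₁, f p = f q → le (f (r p)) (f (r q)) := by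
      intro p q hpq
      apply star
      rw [← hmul, hw1 p, hpq]
      exact pmv_le_refl _
    intro a b hab
    exact pmv_le_antisymm (key a b hab) (key b a hab.symm)
  choose g hg using hsur
  refine ⟨fun z => f (r (g z)), fun x => wd _ _ (hg (f x)), ⟨?_, ?_⟩, ?_⟩
  · intro z
    show mul (f (r (g z))) (f (r (g z))) = z
    rw [← hmul, hw1, hg]
  · intro z y h
    rw [← hg z, ← hg y] at h
    have hst := star (g y) (g z) h
    rwa [hg y] at hst
  · intro z
    have e2 : f (r (g zero)) = f (r zero) := by
      apply wd
      rw [hg, h0]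
    constructor
    · have e1 : f (r (g (lneg z))) = f (r (lneg (g z))) := by
        apply wd
        rw [hg, hln, hg]
      show f (r (g (lneg z))) = arrow (f (r (g z))) (f (r (g zero)))
      rw [e1, e2, (h3 (g z)).1]
      show f (oplus (lneg (r (g z))) (r zero)) = oplus (lneg (f (r (g z)))) (f (r zero))
      rw [hadd, hln]
    · have e1 : f (r (g (rneg z))) = f (r (rneg (g z))) := by
        apply wd
        rw [hg, hrn, hg]
      show f (r (g (rneg z))) = squig (f (r (g z))) (f (r (g zero)))
      rw [e1, e2, (h3 (g z)).2]
      show f (oplus (r zero) (rneg (r (g z)))) = oplus (f (r zero)) (rneg (f (r (g z))))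
      rw [hadd, hrn]
end
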